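/- Let n ∈ ℕ, c ∈ ℂ \ {0}, y > 0 fixed, and let g₀, g₁ : ℝⁿ → ℂ be bounded continuous functions. Define u(x,y) := 2·(Γ((n+3)/2)/π^{(n+1)/2})·y³ ∫_{ℝⁿ} g₀(x−ξ) (|ξ|² + y²)^{−(n+3)/2} dξ + (Γ((n+1)/2)/π^{(n+1)/2})·y² ∫_{ℝⁿ} g₁(x−ξ) (|ξ|² + y²)^{−(n+1)/2} dξ. If there exists a sequence (τ_k) in ℝⁿ with |τ_k| → +∞ such that g₀(·+τ_k) → c·g₀(·) and g₁(·+τ_k) → c·g₁(·) uniformly on compact subsets of ℝⁿ, then x ↦ u(x,y) is bounded and continuous, and u(·+τ_k, y) → c·u(·, y) uniformly on compact subsets of ℝⁿ. -/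

import Mathlib

open MeasureTheory Filter Topology Real

variable {n : ℕ} {φ : EuclideanSpace ℝ (Fin n) → ℝ} {g : EuclideanSpace ℝ (Fin n) → ℂ} {C : ℝ}

lemma kernel_integrable {y s : ℝ} (hy : 0 < y) (hs : (n : ℝ) < s) :
    Integrable (fun ξ : EuclideanSpace ℝ (Fin n) => (‖ξ‖ ^ 2 + y ^ 2) ^ (-s / 2)) := by
  have hs0 : 0 < s := lt_of_le_of_lt (Nat.cast_nonneg n) hs
  set m : ℝ := min 1 (y ^ 2) with hm
  have hm0 : 0 < m := lt_min one_pos (by positivity)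
  have hint : Integrable
      (fun ξ : EuclideanSpace ℝ (Fin n) => m ^ (-s / 2) * ((1 : ℝ) + ‖ξ‖ ^ 2) ^ (-s / 2)) := by
    have : ((Module.finrank ℝ (EuclideanSpace ℝ (Fin n)) : ℝ)) < s := by
      rw [finrank_euclideanSpace_fin]; exact hs
    exact (integrable_rpow_neg_one_add_norm_sq this).const_mul _
  refine hint.mono' ?_ (Filter.Eventually.of_forall fun ξ => ?_)
  · apply Measurable.aestronglyMeasurable
    fun_prop
  · have hb : 0 < ‖ξ‖ ^ 2 + y ^ 2 := by positivity
    rw [Real.norm_of_nonneg (Real.rpow_nonneg hb.le _)]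
    have hle : m * (1 + ‖ξ‖ ^ 2) ≤ ‖ξ‖ ^ 2 + y ^ 2 := by
      have h1 : m ≤ y ^ 2 := min_le_right _ _
      have h2 : m ≤ 1 := min_le_left _ _
      nlinarith [sq_nonneg ‖ξ‖]
    have := Real.rpow_le_rpow_of_nonpos (by positivity) hle (by linarith : -s / 2 ≤ 0)
    calc (‖ξ‖ ^ 2 + y ^ 2) ^ (-s / 2) ≤ (m * (1 + ‖ξ‖ ^ 2)) ^ (-s / 2) := this
      _ = m ^ (-s / 2) * ((1 : ℝ) + ‖ξ‖ ^ 2) ^ (-s / 2) := by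
          rw [Real.mul_rpow hm0.le (by positivity)]

lemma conv_integrable (hφi : Integrable φ) (hgc : Continuous g)
    (hgb : ∀ x, ‖g x‖ ≤ C) (x : EuclideanSpace ℝ (Fin n)) :
    Integrable (fun ξ => g (x - ξ) * ((φ ξ : ℝ) : ℂ)) :=
  Integrable.bdd_mul (Integrable.ofReal (𝕜 := ℂ) hφi)
    ((hgc.comp (continuous_const.sub continuous_id)).aestronglyMeasurable)
    (Filter.Eventually.of_forall fun ξ => hgb _)

lemma conv_norm_le (hφi : Integrable φ) (hφ0 : ∀ ξ, 0 ≤ φ ξ) (hgb : ∀ x, ‖g x‖ ≤ C)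
    (x : EuclideanSpace ℝ (Fin n)) :
    ‖∫ ξ, g (x - ξ) * ((φ ξ : ℝ) : ℂ)‖ ≤ C * ∫ ξ, φ ξ := by
  calc ‖∫ ξ, g (x - ξ) * ((φ ξ : ℝ) : ℂ)‖
      ≤ ∫ ξ, C * φ ξ := by
        refine norm_integral_le_of_norm_le (hφi.const_mul C)
          (Filter.Eventually.of_forall fun ξ => ?_)
        rw [norm_mul, Complex.norm_real, Real.norm_of_nonneg (hφ0 ξ)]
        exact mul_le_mul_of_nonneg_right (hgb _) (hφ0 ξ)
    _ = C * ∫ ξ, φ ξ := integral_const_mul _ _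

lemma conv_continuous (hφi : Integrable φ) (hφ0 : ∀ ξ, 0 ≤ φ ξ) (hgc : Continuous g)
    (hgb : ∀ x, ‖g x‖ ≤ C) :
    Continuous (fun x : EuclideanSpace ℝ (Fin n) => ∫ ξ, g (x - ξ) * ((φ ξ : ℝ) : ℂ)) := by
  refine continuous_of_dominated (fun x => (conv_integrable hφi hgc hgb x).1)
    (fun x => Filter.Eventually.of_forall fun ξ => ?_) (hφi.const_mul C)
    (Filter.Eventually.of_forall fun ξ => ?_)
  · rw [norm_mul, Complex.norm_real, Real.norm_of_nonneg (hφ0 ξ)]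
    exact mul_le_mul_of_nonneg_right (hgb _) (hφ0 ξ)
  · exact ((hgc.comp (continuous_id.sub continuous_const)).mul continuous_const)

/-- Small tails: for every `δ > 0` there is `R` with `∫_{‖ξ‖ > R} φ < δ`. -/
lemma small_tail (hφi : Integrable φ) (hφ0 : ∀ ξ, 0 ≤ φ ξ) {δ : ℝ} (hδ : 0 < δ) :
    ∃ R : ℝ, 0 ≤ R ∧ ∫ ξ in (Metric.closedBall (0 : EuclideanSpace ℝ (Fin n)) R)ᶜ, φ ξ < δ := by
  have hU : (⋃ m : ℕ, Metric.closedBall (0 : EuclideanSpace ℝ (Fin n)) m) = Set.univ := by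
    ext x
    simp only [Set.mem_iUnion, Metric.mem_closedBall, Set.mem_univ, iff_true,
      dist_zero_right]
    obtain ⟨m, hm⟩ := exists_nat_ge ‖x‖
    exact ⟨m, hm⟩
  have htend := tendsto_setIntegral_of_monotone
    (s := fun m : ℕ => Metric.closedBall (0 : EuclideanSpace ℝ (Fin n)) m)
    (fun _ => measurableSet_closedBall)
    (fun i j hij => Metric.closedBall_subset_closedBall (by exact_mod_cast hij))
    (by rw [hU]; exact hφi.integrableOn)
  rw [hU, setIntegral_univ] at htend
  have : ∀ᶠ m : ℕ in atTop, (∫ ξ, φ ξ) - δ < ∫ ξ in Metric.closedBall (0 : EuclideanSpace ℝ (Fin n)) m, φ ξ :=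
    htend.eventually (eventually_gt_nhds (by linarith))
  obtain ⟨m, hm⟩ := this.exists
  refine ⟨m, Nat.cast_nonneg m, ?_⟩
  have hsplit := integral_add_compl (measurableSet_closedBall
    (x := (0 : EuclideanSpace ℝ (Fin n))) (ε := (m : ℝ))) hφi
  linarith

/-- The main uniform-convergence lemma for a single convolution term. -/
lemma conv_tuo (hφi : Integrable φ) (hφ0 : ∀ ξ, 0 ≤ φ ξ) (hgc : Continuous g)
    (hgb : ∀ x, ‖g x‖ ≤ C) (c : ℂ) (τ : ℕ → EuclideanSpace ℝ (Fin n))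
    (hrec : ∀ K : Set (EuclideanSpace ℝ (Fin n)), IsCompact K →
      TendstoUniformlyOn (fun k x => g (x + τ k)) (fun x => c * g x) atTop K)
    (K : Set (EuclideanSpace ℝ (Fin n))) (hK : IsCompact K) :
    TendstoUniformlyOn (fun k x => ∫ ξ, g (x + τ k - ξ) * ((φ ξ : ℝ) : ℂ))
      (fun x => c * ∫ ξ, g (x - ξ) * ((φ ξ : ℝ) : ℂ)) atTop K := by
  have hC0 : 0 ≤ C := le_trans (norm_nonneg _) (hgb 0)
  rw [Metric.tendstoUniformlyOn_iff]
  intro ε hε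
  set I : ℝ := ∫ ξ, φ ξ with hI
  have hI0 : 0 ≤ I := integral_nonneg hφ0
  set M : ℝ := (‖c‖ + 1) * C + 1 with hM
  have hM0 : 0 < M := by positivity
  obtain ⟨R, hR0, hRtail⟩ := small_tail hφi hφ0 (div_pos hε (by positivity) : 0 < ε / (2 * M))
  set B := Metric.closedBall (0 : EuclideanSpace ℝ (Fin n)) R with hB
  set K' := (fun p : EuclideanSpace ℝ (Fin n) × EuclideanSpace ℝ (Fin n) => p.1 - p.2) ''
    (K ×ˢ B) with hK'def
  have hK' : IsCompact K' :=
    (hK.prod (isCompact_closedBall _ _)).image (continuous_fst.sub continuous_snd)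
  have hδ' : 0 < ε / (2 * (I + 1)) := by positivity
  have hev := (Metric.tendstoUniformlyOn_iff.mp (hrec K' hK')) _ hδ'
  filter_upwards [hev] with k hk x hx
  rw [dist_eq_norm]
  -- both integrands are integrable
  have hint1 : Integrable (fun ξ => g (x + τ k - ξ) * ((φ ξ : ℝ) : ℂ)) :=
    conv_integrable hφi hgc hgb _
  have hint2 : Integrable (fun ξ => c * g (x - ξ) * ((φ ξ : ℝ) : ℂ)) := by
    have := (conv_integrable hφi hgc hgb x).const_mul c
    simpa [mul_assoc] using this
  have hmul : c * ∫ ξ, g (x - ξ) * ((φ ξ : ℝ) : ℂ) = ∫ ξ, c * g (x - ξ) * ((φ ξ : ℝ) : ℂ) := by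
    rw [← integral_const_mul]
    simp [mul_assoc]
  rw [hmul, ← integral_sub hint2 hint1]
  -- pointwise norm of the integrand difference
  set h : EuclideanSpace ℝ (Fin n) → ℝ :=
    fun ξ => ‖c * g (x - ξ) * ((φ ξ : ℝ) : ℂ) - g (x + τ k - ξ) * ((φ ξ : ℝ) : ℂ)‖ with hh
  have hhint : Integrable h := (hint2.sub hint1).norm
  have h_le : ‖∫ ξ, (c * g (x - ξ) * ((φ ξ : ℝ) : ℂ) - g (x + τ k - ξ) * ((φ ξ : ℝ) : ℂ))‖
      ≤ ∫ ξ, h ξ := norm_integral_le_integral_norm _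
  refine lt_of_le_of_lt h_le ?_
  have hsplit : (∫ ξ, h ξ) = (∫ ξ in B, h ξ) + ∫ ξ in Bᶜ, h ξ :=
    (integral_add_compl measurableSet_closedBall hhint).symm
  have hbound1 : (∫ ξ in B, h ξ) ≤ (ε / (2 * (I + 1))) * I := by
    have hle : ∀ ξ ∈ B, h ξ ≤ (ε / (2 * (I + 1))) * φ ξ := by
      intro ξ hξ
      have hz : x - ξ ∈ K' := ⟨(x, ξ), ⟨hx, hξ⟩, rfl⟩
      have := hk _ hz
      rw [dist_eq_norm] at this
      have hxt : x + τ k - ξ = (x - ξ) + τ k := by abel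
      calc h ξ = ‖c * g (x - ξ) - g (x + τ k - ξ)‖ * φ ξ := by
            simp only [hh]
            rw [← sub_mul, norm_mul, Complex.norm_real, Real.norm_of_nonneg (hφ0 ξ)]
        _ ≤ (ε / (2 * (I + 1))) * φ ξ := by
            rw [hxt]
            exact mul_le_mul_of_nonneg_right this.le (hφ0 ξ)
    calc (∫ ξ in B, h ξ) ≤ ∫ ξ in B, (ε / (2 * (I + 1))) * φ ξ :=
          setIntegral_mono_on hhint.integrableOn (hφi.const_mul _).integrableOn
            measurableSet_closedBall hle
      _ = (ε / (2 * (I + 1))) * ∫ ξ in B, φ ξ := integral_const_mul _ _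
      _ ≤ (ε / (2 * (I + 1))) * I := by
          refine mul_le_mul_of_nonneg_left ?_ hδ'.le
          exact setIntegral_le_integral hφi (Filter.Eventually.of_forall hφ0)
  have hbound2 : (∫ ξ in Bᶜ, h ξ) ≤ M * ∫ ξ in Bᶜ, φ ξ := by
    have hle : ∀ ξ, h ξ ≤ M * φ ξ := by
      intro ξ
      have : ‖c * g (x - ξ) - g (x + τ k - ξ)‖ ≤ M := by
        calc ‖c * g (x - ξ) - g (x + τ k - ξ)‖ ≤ ‖c * g (x - ξ)‖ + ‖g (x + τ k - ξ)‖ :=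
              norm_sub_le _ _
          _ ≤ ‖c‖ * C + C := by
              rw [norm_mul]
              exact add_le_add (mul_le_mul_of_nonneg_left (hgb _) (norm_nonneg c)) (hgb _)
          _ ≤ M := by rw [hM]; nlinarith
      calc h ξ = ‖c * g (x - ξ) - g (x + τ k - ξ)‖ * φ ξ := by
            simp only [hh]
            rw [← sub_mul, norm_mul, Complex.norm_real, Real.norm_of_nonneg (hφ0 ξ)]
        _ ≤ M * φ ξ := mul_le_mul_of_nonneg_right this (hφ0 ξ)
    calc (∫ ξ in Bᶜ, h ξ) ≤ ∫ ξ in Bᶜ, M * φ ξ :=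
          setIntegral_mono_on hhint.integrableOn (hφi.const_mul _).integrableOn
            measurableSet_closedBall.compl (fun ξ _ => hle ξ)
      _ = M * ∫ ξ in Bᶜ, φ ξ := integral_const_mul _ _
  have htail : M * ∫ ξ in Bᶜ, φ ξ < M * (ε / (2 * M)) :=
    mul_lt_mul_of_pos_left hRtail hM0
  have h1 : (ε / (2 * (I + 1))) * I < ε / 2 := by
    rw [div_mul_eq_mul_div, mul_comm]
    rw [div_lt_div_iff₀ (by positivity) (by norm_num)]
    nlinarith
  have h2 : M * (ε / (2 * M)) = ε / 2 := by
    field_simp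
  calc (∫ ξ, h ξ) = (∫ ξ in B, h ξ) + ∫ ξ in Bᶜ, h ξ := hsplit
    _ < ε / 2 + ε / 2 :=
        add_lt_add_of_le_of_lt (hbound1.trans h1.le) (hbound2.trans_lt (htail.trans_eq h2))
    _ = ε := add_halves ε

lemma tuo_const_mul {α : Type*} {ι : Type*} {p : Filter ι} {s : Set α}
    {F : ι → α → ℂ} {f : α → ℂ} (a : ℂ) (h : TendstoUniformlyOn F f p s) :
    TendstoUniformlyOn (fun i x => a * F i x) (fun x => a * f x) p s := by
  rw [Metric.tendstoUniformlyOn_iff] at h ⊢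
  intro ε hε
  rcases eq_or_ne a 0 with rfl | ha
  · filter_upwards with i x hx
    simpa using hε
  · have hna : 0 < ‖a‖ := norm_pos_iff.mpr ha
    filter_upwards [h (ε / ‖a‖) (by positivity)] with i hi x hx
    have := hi x hx
    rw [dist_eq_norm] at this ⊢
    rw [← mul_sub, norm_mul]
    calc ‖a‖ * ‖f x - F i x‖ < ‖a‖ * (ε / ‖a‖) :=
          mul_lt_mul_of_pos_left this hna
      _ = ε := by rw [mul_comm]; exact div_mul_cancel₀ ε hna.ne'

lemma tuo_add {α : Type*} {ι : Type*} {p : Filter ι} {s : Set α}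
    {F G : ι → α → ℂ} {f g : α → ℂ} (hf : TendstoUniformlyOn F f p s)
    (hg : TendstoUniformlyOn G g p s) :
    TendstoUniformlyOn (fun i x => F i x + G i x) (fun x => f x + g x) p s := by
  rw [Metric.tendstoUniformlyOn_iff] at hf hg ⊢
  intro ε hε
  filter_upwards [hf (ε / 2) (by positivity), hg (ε / 2) (by positivity)] with i hi₁ hi₂ x hx
  calc dist (f x + g x) (F i x + G i x) ≤ dist (f x) (F i x) + dist (g x) (G i x) :=
        dist_add_add_le _ _ _ _
    _ < ε / 2 + ε / 2 := add_lt_add (hi₁ x hx) (hi₂ x hx)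
    _ = ε := add_halves ε


/-- The explicit solution of the Cauchy–Dirichlet problem for the biharmonic operator
`(∂²_{x₁} + ⋯ + ∂²_{xₙ} + ∂²_y)² = 0` in the half-space `y > 0`:
`u(x,y) = 2 Γ((n+3)/2) π^{-(n+1)/2} y³ ∫ g₀(x−ξ)(|ξ|²+y²)^{-(n+3)/2} dξ
        + Γ((n+1)/2) π^{-(n+1)/2} y² ∫ g₁(x−ξ)(|ξ|²+y²)^{-(n+1)/2} dξ`. -/
noncomputable def biharmSol (n : ℕ) (y : ℝ) (g₀ g₁ : EuclideanSpace ℝ (Fin n) → ℂ)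
    (x : EuclideanSpace ℝ (Fin n)) : ℂ :=
  ((2 * Real.Gamma (((n : ℝ) + 3) / 2) / Real.pi ^ (((n : ℝ) + 1) / 2) * y ^ 3 : ℝ) : ℂ) *
      (∫ ξ : EuclideanSpace ℝ (Fin n),
        g₀ (x - ξ) * (((‖ξ‖ ^ 2 + y ^ 2) ^ (-((n : ℝ) + 3) / 2) : ℝ) : ℂ)) +
    ((Real.Gamma (((n : ℝ) + 1) / 2) / Real.pi ^ (((n : ℝ) + 1) / 2) * y ^ 2 : ℝ) : ℂ) *
      (∫ ξ : EuclideanSpace ℝ (Fin n),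
        g₁ (x - ξ) * (((‖ξ‖ ^ 2 + y ^ 2) ^ (-((n : ℝ) + 1) / 2) : ℝ) : ℂ))

/-- If `g₀, g₁` are bounded, continuous and uniformly Poisson `c`-stable with the common
sequence `(τ_k)`, then for each fixed `y > 0` the solution `u(·, y)` of the biharmonic
Cauchy–Dirichlet problem is bounded, continuous and uniformly Poisson `c`-stable with
the same sequence. -/
theorem stmt17 (n : ℕ) (c : ℂ) (hc : c ≠ 0) (y : ℝ) (hy : 0 < y)
    (g₀ g₁ : EuclideanSpace ℝ (Fin n) → ℂ)
    (hg₀c : Continuous g₀) (hg₁c : Continuous g₁)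
    (hg₀b : ∃ C, ∀ x, ‖g₀ x‖ ≤ C) (hg₁b : ∃ C, ∀ x, ‖g₁ x‖ ≤ C)
    (τ : ℕ → EuclideanSpace ℝ (Fin n)) (hτ : Tendsto (fun k => ‖τ k‖) atTop atTop)
    (hrec₀ : ∀ K : Set (EuclideanSpace ℝ (Fin n)), IsCompact K →
      TendstoUniformlyOn (fun k x => g₀ (x + τ k)) (fun x => c * g₀ x) atTop K)
    (hrec₁ : ∀ K : Set (EuclideanSpace ℝ (Fin n)), IsCompact K →
      TendstoUniformlyOn (fun k x => g₁ (x + τ k)) (fun x => c * g₁ x) atTop K) :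
    Continuous (biharmSol n y g₀ g₁) ∧
    (∃ C, ∀ x, ‖biharmSol n y g₀ g₁ x‖ ≤ C) ∧
    ∀ K : Set (EuclideanSpace ℝ (Fin n)), IsCompact K →
      TendstoUniformlyOn (fun k x => biharmSol n y g₀ g₁ (x + τ k))
        (fun x => c * biharmSol n y g₀ g₁ x) atTop K := by
  obtain ⟨C₀, hC₀⟩ := hg₀b
  obtain ⟨C₁, hC₁⟩ := hg₁b
  have hgb₀ : ∀ x, ‖g₀ x‖ ≤ C₀ := fun x => by
    exact hC₀ x
  have hgb₁ : ∀ x, ‖g₁ x‖ ≤ C₁ := fun x => by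
    exact hC₁ x
  set φ₀ : EuclideanSpace ℝ (Fin n) → ℝ :=
    fun ξ => (‖ξ‖ ^ 2 + y ^ 2) ^ (-((n : ℝ) + 3) / 2) with hφ₀def
  set φ₁ : EuclideanSpace ℝ (Fin n) → ℝ :=
    fun ξ => (‖ξ‖ ^ 2 + y ^ 2) ^ (-((n : ℝ) + 1) / 2) with hφ₁def
  have hφ₀i : Integrable φ₀ := kernel_integrable hy (by linarith [Nat.cast_nonneg (α := ℝ) n] :
    (n : ℝ) < (n : ℝ) + 3)
  have hφ₁i : Integrable φ₁ := kernel_integrable hy (by linarith [Nat.cast_nonneg (α := ℝ) n] :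
    (n : ℝ) < (n : ℝ) + 1)
  have hφ₀0 : ∀ ξ, 0 ≤ φ₀ ξ := fun ξ => Real.rpow_nonneg (by positivity) _
  have hφ₁0 : ∀ ξ, 0 ≤ φ₁ ξ := fun ξ => Real.rpow_nonneg (by positivity) _
  set a₀ : ℝ := 2 * Real.Gamma (((n : ℝ) + 3) / 2) / Real.pi ^ (((n : ℝ) + 1) / 2) * y ^ 3
    with ha₀def
  set a₁ : ℝ := Real.Gamma (((n : ℝ) + 1) / 2) / Real.pi ^ (((n : ℝ) + 1) / 2) * y ^ 2
    with ha₁def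
  have hdef : biharmSol n y g₀ g₁ = fun x =>
      (a₀ : ℂ) * (∫ ξ, g₀ (x - ξ) * ((φ₀ ξ : ℝ) : ℂ)) +
      (a₁ : ℂ) * (∫ ξ, g₁ (x - ξ) * ((φ₁ ξ : ℝ) : ℂ)) := rfl
  refine ⟨?_, ?_, ?_⟩
  · rw [hdef]
    exact (continuous_const.mul (conv_continuous hφ₀i hφ₀0 hg₀c hgb₀)).add
      (continuous_const.mul (conv_continuous hφ₁i hφ₁0 hg₁c hgb₁))
  · refine ⟨|a₀| * (C₀ * ∫ ξ, φ₀ ξ) + |a₁| * (C₁ * ∫ ξ, φ₁ ξ), fun x => ?_⟩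
    rw [hdef]
    calc ‖(a₀ : ℂ) * (∫ ξ, g₀ (x - ξ) * ((φ₀ ξ : ℝ) : ℂ)) +
          (a₁ : ℂ) * (∫ ξ, g₁ (x - ξ) * ((φ₁ ξ : ℝ) : ℂ))‖
        ≤ ‖(a₀ : ℂ) * (∫ ξ, g₀ (x - ξ) * ((φ₀ ξ : ℝ) : ℂ))‖ +
          ‖(a₁ : ℂ) * (∫ ξ, g₁ (x - ξ) * ((φ₁ ξ : ℝ) : ℂ))‖ := norm_add_le _ _
      _ ≤ |a₀| * (C₀ * ∫ ξ, φ₀ ξ) + |a₁| * (C₁ * ∫ ξ, φ₁ ξ) := by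
          rw [norm_mul, norm_mul, Complex.norm_real, Complex.norm_real,
            Real.norm_eq_abs, Real.norm_eq_abs]
          exact add_le_add
            (mul_le_mul_of_nonneg_left (conv_norm_le hφ₀i hφ₀0 hgb₀ x) (abs_nonneg a₀))
            (mul_le_mul_of_nonneg_left (conv_norm_le hφ₁i hφ₁0 hgb₁ x) (abs_nonneg a₁))
  · intro K hK
    have h₀ := conv_tuo hφ₀i hφ₀0 hg₀c hgb₀ c τ hrec₀ K hK
    have h₁ := conv_tuo hφ₁i hφ₁0 hg₁c hgb₁ c τ hrec₁ K hK
    have hsum := tuo_add (tuo_const_mul (a₀ : ℂ) h₀) (tuo_const_mul (a₁ : ℂ) h₁)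
    have heq : (fun x => c * biharmSol n y g₀ g₁ x) = fun x =>
        (a₀ : ℂ) * (c * ∫ ξ, g₀ (x - ξ) * ((φ₀ ξ : ℝ) : ℂ)) +
        (a₁ : ℂ) * (c * ∫ ξ, g₁ (x - ξ) * ((φ₁ ξ : ℝ) : ℂ)) := by
      funext x
      rw [hdef]
      ring
    rw [heq]
    exact hsum
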